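/- Let ω = (ε + s)/t and ω' = (ε + s')/t' be elliptic elements of K̃ \ K (s, t, s', t' ∈ A, t, t' ≠ 0), with associated ideals J_ω = tA + (ε + s)A and J_{ω'} = t'A + (ε + s')A of Ã. Then there exists M ∈ GL₂(A) with M·ω = ω' under the Möbius action if and only if J_ω and J_{ω'} are equivalent ideals of Ã, i.e. there exist nonzero a, b ∈ Ã with a·J_ω = b·J_{ω'}. -/

import Mathlib

open Matrix Polynomial

/-- The Möbius action of a `2 × 2` matrix over `A` on elements of a field extension. -/
noncomputable def mob {A Kt : Type*} [CommRing A] [Field Kt] [Algebra A Kt]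
    (M : Matrix (Fin 2) (Fin 2) A) (ω : Kt) : Kt :=
  (algebraMap A Kt (M 0 0) * ω + algebraMap A Kt (M 0 1)) /
    (algebraMap A Kt (M 1 0) * ω + algebraMap A Kt (M 1 1))

lemma indep_aux {A K Kt : Type*} [CommRing A] [IsDomain A] [Field K] [Field Kt]
    [Algebra A K] [IsFractionRing A K] [Algebra K Kt] [Algebra A Kt] [IsScalarTower A K Kt]
    {ε : Kt} (hε1 : ε ∉ Set.range (algebraMap K Kt)) {s t : A} (ht : t ≠ 0)
    {ω : Kt} (hω : ω = (ε + algebraMap A Kt s) / algebraMap A Kt t)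
    {x y : A} (hxy : algebraMap A Kt x * ω + algebraMap A Kt y = 0) : x = 0 ∧ y = 0 := by
  have hi : Function.Injective (algebraMap A Kt) := by
    rw [IsScalarTower.algebraMap_eq A K Kt]
    exact (algebraMap K Kt).injective.comp (IsFractionRing.injective A K)
  have hit : algebraMap A Kt t ≠ 0 := fun h => ht (hi (by simpa using h))
  have hε : ε = algebraMap A Kt t * ω - algebraMap A Kt s := by
    rw [hω]; field_simp; ring
  by_cases hx : x = 0
  · subst hx
    simp only [map_zero, zero_mul, zero_add] at hxy
    exact ⟨rfl, hi (by simpa using hxy)⟩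
  · exfalso
    apply hε1
    have hix : algebraMap A Kt x ≠ 0 := fun h => hx (hi (by simpa using h))
    have hωK : ω = algebraMap K Kt (algebraMap A K (-y) / algebraMap A K x) := by
      rw [map_div₀, ← IsScalarTower.algebraMap_apply, ← IsScalarTower.algebraMap_apply,
        eq_div_iff hix, map_neg]
      linear_combination hxy
    refine ⟨algebraMap A K t * (algebraMap A K (-y) / algebraMap A K x) - algebraMap A K s, ?_⟩
    rw [map_sub, _root_.map_mul, ← hωK, ← IsScalarTower.algebraMap_apply,
      ← IsScalarTower.algebraMap_apply, ← hε]

theorem stmt_9 (Fq : Type*) [Field Fq] [Fintype Fq] (q : ℕ) (hq : Fintype.card Fq = q)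
    (A : Type*) [CommRing A] [IsDomain A] [IsDedekindDomain A] [Algebra Fq A]
    (K : Type*) [Field K] [Algebra A K] [IsFractionRing A K]
    (hunits : ∀ u : Aˣ, ∃ α : Fqˣ, algebraMap Fq A (α : Fq) = (u : A))
    (Kt : Type*) [Field Kt] [Algebra K Kt] [Algebra A Kt] [IsScalarTower A K Kt]
    (ε : Kt) (hε1 : ε ∉ Set.range (algebraMap K Kt)) (hε2 : ε ^ q ^ 2 = ε)
    (hε3 : ε ^ q ≠ ε) (hgen : Algebra.adjoin K {ε} = ⊤)
    (s t s' t' : A) (ht : t ≠ 0) (ht' : t' ≠ 0)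
    (hell : ∃ u : A, (ε ^ q + algebraMap A Kt s) * (ε + algebraMap A Kt s) =
      algebraMap A Kt t * algebraMap A Kt u)
    (hell' : ∃ u : A, (ε ^ q + algebraMap A Kt s') * (ε + algebraMap A Kt s') =
      algebraMap A Kt t' * algebraMap A Kt u)
    (ω ω' : Kt) (hω : ω = (ε + algebraMap A Kt s) / algebraMap A Kt t)
    (hω' : ω' = (ε + algebraMap A Kt s') / algebraMap A Kt t') :
    (∃ M : GL (Fin 2) A, mob (↑M : Matrix (Fin 2) (Fin 2) A) ω = ω') ↔
      ∃ a b : Kt, a ∈ Algebra.adjoin A {ε} ∧ b ∈ Algebra.adjoin A {ε} ∧ a ≠ 0 ∧ b ≠ 0 ∧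
        (fun x => a * x) ''
            (Submodule.span A ({algebraMap A Kt t, ε + algebraMap A Kt s} : Set Kt) : Set Kt) =
          (fun x => b * x) ''
            (Submodule.span A ({algebraMap A Kt t', ε + algebraMap A Kt s'} : Set Kt) : Set Kt) := by
  have hi : Function.Injective (algebraMap A Kt) := by
    rw [IsScalarTower.algebraMap_eq A K Kt]
    exact (algebraMap K Kt).injective.comp (IsFractionRing.injective A K)
  have hit : algebraMap A Kt t ≠ 0 := fun h => ht (hi (by simpa using h))
  have hit' : algebraMap A Kt t' ≠ 0 := fun h => ht' (hi (by simpa using h))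
  have hωt : algebraMap A Kt t * ω = ε + algebraMap A Kt s := by
    rw [hω]; field_simp
  have hωt' : algebraMap A Kt t' * ω' = ε + algebraMap A Kt s' := by
    rw [hω']; field_simp
  have huniq : ∀ x y x' y' : A, algebraMap A Kt x * ω + algebraMap A Kt y
      = algebraMap A Kt x' * ω + algebraMap A Kt y' → x = x' ∧ y = y' := by
    intro x y x' y' h
    have h2 : algebraMap A Kt (x - x') * ω + algebraMap A Kt (y - y') = 0 := by
      rw [map_sub, map_sub]; linear_combination h
    obtain ⟨h3, h4⟩ := indep_aux (K := K) hε1 ht hω h2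
    exact ⟨sub_eq_zero.mp h3, sub_eq_zero.mp h4⟩
  have huniq' : ∀ x y x' y' : A, algebraMap A Kt x * ω' + algebraMap A Kt y
      = algebraMap A Kt x' * ω' + algebraMap A Kt y' → x = x' ∧ y = y' := by
    intro x y x' y' h
    have h2 : algebraMap A Kt (x - x') * ω' + algebraMap A Kt (y - y') = 0 := by
      rw [map_sub, map_sub]; linear_combination h
    obtain ⟨h3, h4⟩ := indep_aux (K := K) hε1 ht' hω' h2
    exact ⟨sub_eq_zero.mp h3, sub_eq_zero.mp h4⟩
  have himg : ∀ (c : Kt) (p : Submodule A Kt),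
      (fun x => c * x) '' (p : Set Kt) = ↑(Submodule.map (LinearMap.mulLeft A c) p) := by
    intro c p
    rw [Submodule.map_coe]
    rfl
  have hmap : ∀ (c x y : Kt), Submodule.map (LinearMap.mulLeft A c) (Submodule.span A {x, y})
      = Submodule.span A {c * x, c * y} := by
    intro c x y
    rw [Submodule.map_span, Set.image_insert_eq, Set.image_singleton]
    rfl
  have hJ : Submodule.span A ({algebraMap A Kt t, ε + algebraMap A Kt s} : Set Kt)
      = Submodule.map (LinearMap.mulLeft A (algebraMap A Kt t))
        (Submodule.span A ({ω, 1} : Set Kt)) := by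
    rw [hmap, hωt, mul_one, Set.pair_comm (ε + algebraMap A Kt s) (algebraMap A Kt t)]
  have hJ' : Submodule.span A ({algebraMap A Kt t', ε + algebraMap A Kt s'} : Set Kt)
      = Submodule.map (LinearMap.mulLeft A (algebraMap A Kt t'))
        (Submodule.span A ({ω', 1} : Set Kt)) := by
    rw [hmap, hωt', mul_one, Set.pair_comm (ε + algebraMap A Kt s') (algebraMap A Kt t')]
  constructor
  · rintro ⟨M, hM⟩
    set a0 := (↑M : Matrix (Fin 2) (Fin 2) A) 0 0 with ha0
    set b0 := (↑M : Matrix (Fin 2) (Fin 2) A) 0 1 with hb0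
    set c0 := (↑M : Matrix (Fin 2) (Fin 2) A) 1 0 with hc0
    set d0 := (↑M : Matrix (Fin 2) (Fin 2) A) 1 1 with hd0
    obtain ⟨e, he⟩ := (Matrix.isUnit_iff_isUnit_det _).mp M.isUnit
    have hdet : (e : A) = a0 * d0 - b0 * c0 := by rw [he, Matrix.det_fin_two]
    set u := ((e⁻¹ : Aˣ) : A) with hudef
    have hu : u * (a0 * d0 - b0 * c0) = 1 := by rw [← hdet]; exact e.inv_mul
    have hu'' : algebraMap A Kt u * (algebraMap A Kt a0 * algebraMap A Kt d0
        - algebraMap A Kt b0 * algebraMap A Kt c0) = 1 := by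
      simpa only [_root_.map_mul, map_sub, _root_.map_one] using congrArg (algebraMap A Kt) hu
    set l := algebraMap A Kt c0 * ω + algebraMap A Kt d0 with hl
    have hlne : l ≠ 0 := by
      intro h0
      obtain ⟨hc, hd⟩ := indep_aux (K := K) hε1 ht hω h0
      have h1 : (e : A) = 0 := by rw [hdet, hc, hd]; ring
      have := e.mul_inv
      rw [h1, zero_mul] at this
      exact zero_ne_one this
    simp only [mob] at hM
    rw [div_eq_iff hlne] at hM
    -- hM : algebraMap A Kt a0 * ω + algebraMap A Kt b0 = ω' * l
    have hL : Submodule.span A ({ω, 1} : Set Kt)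
        = Submodule.map (LinearMap.mulLeft A l) (Submodule.span A ({ω', 1} : Set Kt)) := by
      rw [hmap, mul_one]
      apply le_antisymm
      · rw [Submodule.span_le, Set.insert_subset_iff, Set.singleton_subset_iff]
        constructor
        · rw [SetLike.mem_coe, Submodule.mem_span_pair]
          refine ⟨u * d0, u * (-b0), ?_⟩
          rw [Algebra.smul_def, Algebra.smul_def, _root_.map_mul, _root_.map_mul, map_neg]
          linear_combination (-(algebraMap A Kt u * algebraMap A Kt d0)) * hM
            + (-(algebraMap A Kt u * algebraMap A Kt b0)) * hl + ω * hu''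
        · rw [SetLike.mem_coe, Submodule.mem_span_pair]
          refine ⟨u * (-c0), u * a0, ?_⟩
          rw [Algebra.smul_def, Algebra.smul_def, _root_.map_mul, _root_.map_mul, map_neg]
          linear_combination (algebraMap A Kt u * algebraMap A Kt c0) * hM
            + (algebraMap A Kt u * algebraMap A Kt a0) * hl + hu''
      · rw [Submodule.span_le, Set.insert_subset_iff, Set.singleton_subset_iff]
        constructor
        · rw [SetLike.mem_coe, Submodule.mem_span_pair]
          refine ⟨a0, b0, ?_⟩
          rw [Algebra.smul_def, Algebra.smul_def]
          linear_combination hM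
        · rw [SetLike.mem_coe, Submodule.mem_span_pair]
          refine ⟨c0, d0, ?_⟩
          rw [Algebra.smul_def, Algebra.smul_def]
          linear_combination -hl
    refine ⟨algebraMap A Kt t',
      algebraMap A Kt c0 * (ε + algebraMap A Kt s) + algebraMap A Kt (d0 * t),
      Subalgebra.algebraMap_mem _ t', ?_, hit', ?_, ?_⟩
    · exact add_mem (mul_mem (Subalgebra.algebraMap_mem _ c0)
        (add_mem (Algebra.self_mem_adjoin_singleton A ε) (Subalgebra.algebraMap_mem _ s)))
        (Subalgebra.algebraMap_mem _ (d0 * t))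
    · have hb_eq : algebraMap A Kt c0 * (ε + algebraMap A Kt s) + algebraMap A Kt (d0 * t)
          = algebraMap A Kt t * l := by
        rw [_root_.map_mul]
        linear_combination (-(algebraMap A Kt c0)) * hωt + (-(algebraMap A Kt t)) * hl
      rw [hb_eq]
      exact mul_ne_zero hit hlne
    · have hb_eq : algebraMap A Kt c0 * (ε + algebraMap A Kt s) + algebraMap A Kt (d0 * t)
          = algebraMap A Kt t * l := by
        rw [_root_.map_mul]
        linear_combination (-(algebraMap A Kt c0)) * hωt + (-(algebraMap A Kt t)) * hl
      rw [himg, himg, hJ, hJ', ← Submodule.map_comp, ← Submodule.map_comp,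
        ← LinearMap.mulLeft_mul, ← LinearMap.mulLeft_mul]
      have hfinal : Submodule.map (LinearMap.mulLeft A (algebraMap A Kt t' * algebraMap A Kt t))
          (Submodule.span A ({ω, 1} : Set Kt))
          = Submodule.map (LinearMap.mulLeft A
            ((algebraMap A Kt c0 * (ε + algebraMap A Kt s) + algebraMap A Kt (d0 * t))
              * algebraMap A Kt t')) (Submodule.span A ({ω', 1} : Set Kt)) := by
        rw [hL, ← Submodule.map_comp, ← LinearMap.mulLeft_mul]
        have hscal : algebraMap A Kt t' * algebraMap A Kt t * l
            = (algebraMap A Kt c0 * (ε + algebraMap A Kt s) + algebraMap A Kt (d0 * t))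
              * algebraMap A Kt t' := by
          rw [hb_eq]; ring
        rw [hscal]
      exact congrArg (fun (p : Submodule A Kt) => (p : Set Kt)) hfinal
  · rintro ⟨a, b, -, -, ha0, hb0, hset⟩
    rw [himg, himg, hJ, hJ', ← Submodule.map_comp, ← Submodule.map_comp,
      ← LinearMap.mulLeft_mul, ← LinearMap.mulLeft_mul] at hset
    have hset2 : Submodule.map (LinearMap.mulLeft A (a * algebraMap A Kt t))
        (Submodule.span A ({ω, 1} : Set Kt))
        = Submodule.map (LinearMap.mulLeft A (b * algebraMap A Kt t'))
          (Submodule.span A ({ω', 1} : Set Kt)) := SetLike.coe_injective hset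
    set c1 := a * algebraMap A Kt t with hc1def
    set c2 := b * algebraMap A Kt t' with hc2def
    have hc1 : c1 ≠ 0 := mul_ne_zero ha0 hit
    have hc2 : c2 ≠ 0 := mul_ne_zero hb0 hit'
    rw [hmap, hmap, mul_one, mul_one] at hset2
    have h1 : c2 * ω' ∈ Submodule.span A ({c1 * ω, c1} : Set Kt) := by
      rw [hset2]; exact Submodule.subset_span (Set.mem_insert _ _)
    have h2 : c2 ∈ Submodule.span A ({c1 * ω, c1} : Set Kt) := by
      rw [hset2]; exact Submodule.subset_span (Set.mem_insert_iff.mpr (Or.inr rfl))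
    have h3 : c1 * ω ∈ Submodule.span A ({c2 * ω', c2} : Set Kt) := by
      rw [← hset2]; exact Submodule.subset_span (Set.mem_insert _ _)
    have h4 : c1 ∈ Submodule.span A ({c2 * ω', c2} : Set Kt) := by
      rw [← hset2]; exact Submodule.subset_span (Set.mem_insert_iff.mpr (Or.inr rfl))
    obtain ⟨p, qq, hpq⟩ := Submodule.mem_span_pair.mp h1
    obtain ⟨r, s0, hrs⟩ := Submodule.mem_span_pair.mp h2
    obtain ⟨p', q', hpq'⟩ := Submodule.mem_span_pair.mp h3
    obtain ⟨r', s'0, hrs'⟩ := Submodule.mem_span_pair.mp h4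
    rw [Algebra.smul_def, Algebra.smul_def] at hpq hrs hpq' hrs'
    obtain ⟨e11, e12⟩ := huniq (p' * p + q' * r) (p' * qq + q' * s0) 1 0 (by
      apply mul_left_cancel₀ hc1
      simp only [map_add, _root_.map_mul, _root_.map_one, map_zero]
      linear_combination (algebraMap A Kt p') * hpq + (algebraMap A Kt q') * hrs + hpq')
    obtain ⟨e21, e22⟩ := huniq (r' * p + s'0 * r) (r' * qq + s'0 * s0) 0 1 (by
      apply mul_left_cancel₀ hc1
      simp only [map_add, _root_.map_mul, _root_.map_one, map_zero]
      linear_combination (algebraMap A Kt r') * hpq + (algebraMap A Kt s'0) * hrs + hrs')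
    obtain ⟨f11, f12⟩ := huniq' (p * p' + qq * r') (p * q' + qq * s'0) 1 0 (by
      apply mul_left_cancel₀ hc2
      simp only [map_add, _root_.map_mul, _root_.map_one, map_zero]
      linear_combination (algebraMap A Kt p) * hpq' + (algebraMap A Kt qq) * hrs' + hpq)
    obtain ⟨f21, f22⟩ := huniq' (r * p' + s0 * r') (r * q' + s0 * s'0) 0 1 (by
      apply mul_left_cancel₀ hc2
      simp only [map_add, _root_.map_mul, _root_.map_one, map_zero]
      linear_combination (algebraMap A Kt r) * hpq' + (algebraMap A Kt s0) * hrs' + hrs)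
    refine ⟨⟨!![p, qq; r, s0], !![p', q'; r', s'0], ?_, ?_⟩, ?_⟩
    · rw [Matrix.mul_fin_two, f11, f12, f21, f22]
      exact Matrix.one_fin_two.symm
    · rw [Matrix.mul_fin_two, e11, e12, e21, e22]
      exact Matrix.one_fin_two.symm
    · show mob !![p, qq; r, s0] ω = ω'
      have hden0 : c1 * (algebraMap A Kt r * ω + algebraMap A Kt s0) = c2 := by
        linear_combination hrs
      have hden : algebraMap A Kt r * ω + algebraMap A Kt s0 ≠ 0 := by
        intro h
        rw [h, mul_zero] at hden0
        exact hc2 hden0.symm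
      have hentry : mob !![p, qq; r, s0] ω = (algebraMap A Kt p * ω + algebraMap A Kt qq) /
          (algebraMap A Kt r * ω + algebraMap A Kt s0) := by
        simp [mob]
      rw [hentry, div_eq_iff hden]
      apply mul_left_cancel₀ hc1
      linear_combination hpq - ω' * hden0
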